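/- arXiv:2007.01002 — 2 statements merged into one kernel-verified Lean document; each statement's English description precedes it below -/
import Mathlib

section
/- Let d ≥ 1 and let L : ℝ^d → ℝ be continuously differentiable. Fix x ∈ ℝ^d. For δ > 0 define the expected two-point zero-order gradient estimator ĝ(δ) = ∫_{S^{d−1}} (d/(2δ))·(L(x + δ·v) − L(x − δ·v)) · v dσ(v). Then ĝ(δ) converges to the gradient ∇L(x) as δ → 0⁺; i.e., the two-point zero-order gradient estimator with direction v drawn uniformly from the unit sphere is unbiased in the limit δ → 0 (Proposition 1). -/
open MeasureTheory


lemma coord_abs_le_norm {d : ℕ} (v : EuclideanSpace ℝ (Fin d)) (i : Fin d) : |v i| ≤ ‖v‖ := by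
  rw [EuclideanSpace.norm_eq]
  have h1 : ‖v i‖ ^ 2 ≤ ∑ j, ‖v j‖ ^ 2 :=
    Finset.single_le_sum (f := fun j => ‖v j‖ ^ 2) (fun j _ => sq_nonneg _) (Finset.mem_univ i)
  calc |v i| = Real.sqrt (‖v i‖ ^ 2) := by rw [Real.sqrt_sq_eq_abs]; simp
    _ ≤ _ := Real.sqrt_le_sqrt h1

lemma integrable_sphere_bound {d : ℕ} {F : Type*} [NormedAddCommGroup F]
    (σ : Measure (EuclideanSpace ℝ (Fin d))) [IsProbabilityMeasure σ]
    (hσ_sphere : ∀ᵐ v ∂σ, ‖v‖ = 1)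
    {f : EuclideanSpace ℝ (Fin d) → F} (hf : Continuous f) (C : ℝ)
    (hC : ∀ v : EuclideanSpace ℝ (Fin d), ‖v‖ = 1 → ‖f v‖ ≤ C) : Integrable f σ :=
  (integrable_const C).mono' hf.aestronglyMeasurable
    (hσ_sphere.mono fun v hv => hC v hv)

lemma moment_int {d : ℕ}
    (σ : Measure (EuclideanSpace ℝ (Fin d))) [IsProbabilityMeasure σ]
    (hσ_sphere : ∀ᵐ v ∂σ, ‖v‖ = 1) (i j : Fin d) :
    Integrable (fun v : EuclideanSpace ℝ (Fin d) => v i * v j) σ := by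
  apply integrable_sphere_bound σ hσ_sphere
    (((EuclideanSpace.proj i).continuous).mul ((EuclideanSpace.proj j).continuous)) 1
  intro v hv
  have h1 := coord_abs_le_norm v i
  have h2 := coord_abs_le_norm v j
  rw [hv] at h1 h2
  calc ‖v i * v j‖ = |v i| * |v j| := abs_mul _ _
    _ ≤ 1 * 1 := by exact mul_le_mul h1 h2 (abs_nonneg _) zero_le_one
    _ = 1 := one_mul 1

lemma moment {d : ℕ}
    (σ : Measure (EuclideanSpace ℝ (Fin d))) [IsProbabilityMeasure σ]
    (hσ_sphere : ∀ᵐ v ∂σ, ‖v‖ = 1)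
    (hσ_inv : ∀ T : EuclideanSpace ℝ (Fin d) ≃ₗᵢ[ℝ] EuclideanSpace ℝ (Fin d),
      Measure.map T σ = σ) (i j : Fin d) :
    ∫ v, v i * v j ∂σ = if i = j then (d : ℝ)⁻¹ else 0 := by
  have key : ∀ (T : EuclideanSpace ℝ (Fin d) ≃ₗᵢ[ℝ] EuclideanSpace ℝ (Fin d))
      (k l : Fin d), ∫ v, v k * v l ∂σ = ∫ v, (T v) k * (T v) l ∂σ := by
    intro T k l
    conv_lhs => rw [← hσ_inv T]
    rw [integral_map T.continuous.aemeasurable]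
    exact Continuous.aestronglyMeasurable
      (((EuclideanSpace.proj k).continuous).mul ((EuclideanSpace.proj l).continuous))
  by_cases hij : i = j
  · subst hij
    simp only [if_pos rfl]
    -- all diagonal moments are equal
    have hall : ∀ j : Fin d, ∫ v, v j * v j ∂σ = ∫ v, v i * v i ∂σ := by
      intro j
      have := key (LinearIsometryEquiv.piLpCongrLeft 2 ℝ ℝ (Equiv.swap i j)) j j
      rw [this]
      congr 1
      ext v
      simp only [LinearIsometryEquiv.piLpCongrLeft_apply, Equiv.piCongrLeft'_apply]
      rw [Equiv.symm_swap, Equiv.swap_apply_right]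
    have hsum : ∑ j : Fin d, ∫ v, v j * v j ∂σ = 1 := by
      rw [← integral_finset_sum _ (fun j _ => moment_int σ hσ_sphere j j)]
      have hc : ∫ (v : EuclideanSpace ℝ (Fin d)), (∑ j : Fin d, v j * v j) ∂σ
          = ∫ (_ : EuclideanSpace ℝ (Fin d)), (1 : ℝ) ∂σ := by
        apply integral_congr_ae
        filter_upwards [hσ_sphere] with v hv
        have hs2 : ∑ j : Fin d, v j * v j = ‖v‖ ^ 2 := by
          rw [EuclideanSpace.norm_eq, Real.sq_sqrt (Finset.sum_nonneg fun j _ => sq_nonneg _)]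
          simp [pow_two]
        rw [hs2, hv]; norm_num
      rw [hc]; simp
    have hd0 : (d : ℝ) ≠ 0 := Nat.cast_ne_zero.mpr (Nat.pos_of_ne_zero
      (fun h => by subst h; exact i.elim0)).ne'
    have : (d : ℝ) * ∫ v, v i * v i ∂σ = 1 := by
      rw [← hsum, Finset.sum_congr rfl fun j _ => hall j]
      simp [Finset.sum_const, mul_comm]
    field_simp
    rw [if_pos trivial, eq_div_iff hd0, mul_comm]
    simpa only [pow_two] using this
  · simp only [if_neg hij]
    set T := LinearIsometryEquiv.piLpCongrRight 2
      (fun k : Fin d => if k = i then LinearIsometryEquiv.neg ℝ (E := ℝ)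
        else LinearIsometryEquiv.refl ℝ ℝ) with hT
    have hTv : ∀ (v : EuclideanSpace ℝ (Fin d)) (k : Fin d),
        (T v) k = if k = i then -(v k) else v k := by
      intro v k
      rw [hT, LinearIsometryEquiv.piLpCongrRight_apply]
      by_cases h : k = i
      · subst h; simp
      · simp [h]
    have := key T i j
    have heq : ∫ v, (T v) i * (T v) j ∂σ = -∫ v, v i * v j ∂σ := by
      rw [← integral_neg]
      congr 1
      ext v
      rw [hTv, hTv, if_pos rfl, if_neg (fun h => hij h.symm)]
      ring
    rw [heq] at this
    linarith [this]

lemma integral_dir_smul {d : ℕ}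
    (σ : Measure (EuclideanSpace ℝ (Fin d))) [IsProbabilityMeasure σ]
    (hσ_sphere : ∀ᵐ v ∂σ, ‖v‖ = 1)
    (hσ_inv : ∀ T : EuclideanSpace ℝ (Fin d) ≃ₗᵢ[ℝ] EuclideanSpace ℝ (Fin d),
      Measure.map T σ = σ)
    (g : EuclideanSpace ℝ (Fin d)) :
    ∫ v, ((d : ℝ) * (inner ℝ g v : ℝ)) • v ∂σ = g := by
  have hcont : Continuous (fun v : EuclideanSpace ℝ (Fin d) =>
      ((d : ℝ) * (inner ℝ g v : ℝ)) • v) := by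
    exact ((continuous_const.mul (continuous_const.inner (𝕜 := ℝ) continuous_id)).smul continuous_id)
  have hint : Integrable (fun v : EuclideanSpace ℝ (Fin d) =>
      ((d : ℝ) * (inner ℝ g v : ℝ)) • v) σ := by
    apply integrable_sphere_bound σ hσ_sphere hcont ((d : ℝ) * ‖g‖)
    intro v hv
    rw [norm_smul, hv, mul_one]
    calc ‖(d : ℝ) * (inner ℝ g v : ℝ)‖ = (d : ℝ) * ‖(inner ℝ g v : ℝ)‖ := by
          rw [norm_mul]; simp
      _ ≤ (d : ℝ) * (‖g‖ * ‖v‖) := by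
          exact mul_le_mul_of_nonneg_left (norm_inner_le_norm g v) (Nat.cast_nonneg d)
      _ = (d : ℝ) * ‖g‖ := by rw [hv, mul_one]
  refine PiLp.ext fun i => ?_
  have hproj := (EuclideanSpace.proj (𝕜 := ℝ) i).integral_comp_comm hint
  have hlhs : (∫ v, ((d : ℝ) * (inner ℝ g v : ℝ)) • v ∂σ) i
      = ∫ v, ((d : ℝ) * (inner ℝ g v : ℝ)) * v i ∂σ := by
    simpa using hproj.symm
  rw [hlhs]
  have hexp : ∀ v : EuclideanSpace ℝ (Fin d),
      ((d : ℝ) * (inner ℝ g v : ℝ)) * v i = ∑ j : Fin d, ((d : ℝ) * g j) * (v j * v i) := by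
    intro v
    rw [PiLp.inner_apply]
    simp only [RCLike.inner_apply, starRingEnd_apply, star_trivial]
    rw [Finset.mul_sum, Finset.sum_mul]
    congr 1; ext j; ring
  rw [integral_congr_ae (Filter.Eventually.of_forall hexp)]
  rw [integral_finset_sum _ (fun j _ =>
    (moment_int σ hσ_sphere j i).const_mul ((d : ℝ) * g j))]
  have hd0 : (d : ℝ) ≠ 0 := Nat.cast_ne_zero.mpr (Nat.pos_of_ne_zero
    (fun h => by subst h; exact i.elim0)).ne'
  have : ∀ j : Fin d, ∫ v, ((d : ℝ) * g j) * (v j * v i) ∂σ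
      = if j = i then g i else 0 := by
    intro j
    rw [integral_const_mul, moment σ hσ_sphere hσ_inv j i]
    by_cases h : j = i
    · subst h; rw [if_pos rfl, if_pos rfl]; field_simp
    · rw [if_neg h, if_neg h, mul_zero]
  rw [Finset.sum_congr rfl fun j _ => this j]
  simp

/-- **Proposition 1 (unbiasedness of the two-point zero-order gradient estimator).**
Let `σ` be the uniform (rotation-invariant) Borel probability measure on the unit sphere
of `ℝ^d` and let `L : ℝ^d → ℝ` be continuously differentiable. Then the expected
two-point zero-order gradient estimator
`ĝ(δ) = ∫ (d/(2δ)) (L(x + δv) - L(x - δv)) v dσ(v)`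
converges to the gradient `∇L(x)` as `δ → 0⁺`. -/
theorem two_point_zero_order_estimator_unbiased
    (d : ℕ) (hd : 1 ≤ d)
    (σ : Measure (EuclideanSpace ℝ (Fin d))) [IsProbabilityMeasure σ]
    (hσ_sphere : ∀ᵐ v ∂σ, ‖v‖ = 1)
    (hσ_inv : ∀ T : EuclideanSpace ℝ (Fin d) ≃ₗᵢ[ℝ] EuclideanSpace ℝ (Fin d),
      Measure.map T σ = σ)
    (L : EuclideanSpace ℝ (Fin d) → ℝ) (hL : ContDiff ℝ 1 L)
    (x : EuclideanSpace ℝ (Fin d)) :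
    Filter.Tendsto
      (fun δ : ℝ =>
        ∫ v, ((d : ℝ) / (2 * δ)) • ((L (x + δ • v) - L (x - δ • v)) • v) ∂σ)
      (nhdsWithin 0 (Set.Ioi 0)) (nhds (gradient L x)) := by
  set G := gradient L x with hG
  set φ := fderiv ℝ L x with hφ
  have hginner : ∀ v : EuclideanSpace ℝ (Fin d), (inner ℝ G v : ℝ) = φ v := fun v =>
    InnerProductSpace.toDual_symm_apply
  -- the limiting integrand
  set Gv : EuclideanSpace ℝ (Fin d) → EuclideanSpace ℝ (Fin d) :=
    fun v => ((d : ℝ) * (inner ℝ G v : ℝ)) • v with hGv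
  have hGvint : Integrable Gv σ := by
    apply integrable_sphere_bound σ hσ_sphere
      ((continuous_const.mul (continuous_const.inner (𝕜 := ℝ) continuous_id)).smul continuous_id)
      ((d : ℝ) * ‖G‖)
    intro v hv
    simp only [id_eq]
    show ‖((d : ℝ) * (inner ℝ G v : ℝ)) • v‖ ≤ (d : ℝ) * ‖G‖
    rw [norm_smul, hv, mul_one]
    calc ‖(d : ℝ) * (inner ℝ G v : ℝ)‖ = (d : ℝ) * ‖(inner ℝ G v : ℝ)‖ := by rw [norm_mul]; simp
      _ ≤ (d : ℝ) * (‖G‖ * ‖v‖) :=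
          mul_le_mul_of_nonneg_left (norm_inner_le_norm G v) (Nat.cast_nonneg d)
      _ = (d : ℝ) * ‖G‖ := by rw [hv, mul_one]
  have hGvi : ∫ v, Gv v ∂σ = G := integral_dir_smul σ hσ_sphere hσ_inv G
  have hLdiff : Differentiable ℝ L := hL.differentiable one_ne_zero
  have hLcont : Continuous L := hLdiff.continuous
  rw [Metric.tendsto_nhdsWithin_nhds]
  intro ε hε
  set ε' : ℝ := ε / (2 * ((d : ℝ) + 1)) with hε'def
  have hc : (0:ℝ) < 2 * ((d : ℝ) + 1) := by positivity
  have hε' : 0 < ε' := by positivity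
  have hdε : (d : ℝ) * ε' < ε := by
    rw [hε'def, mul_div_assoc']
    rw [div_lt_iff₀ hc]
    nlinarith [Nat.cast_nonneg (α := ℝ) d, hε]
  -- continuity of the derivative at x
  have hfc : ContinuousAt (fderiv ℝ L) x := (hL.continuous_fderiv one_ne_zero).continuousAt
  rw [Metric.continuousAt_iff] at hfc
  obtain ⟨r, hr, hrb⟩ := hfc ε' hε'
  refine ⟨r, hr, ?_⟩
  intro δ hδ hδr
  have hδ0 : 0 < δ := hδ
  have hδr' : δ < r := by
    rwa [Real.dist_eq, sub_zero, abs_of_pos hδ0] at hδr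
  -- pointwise bound on the sphere
  set Fδ : EuclideanSpace ℝ (Fin d) → EuclideanSpace ℝ (Fin d) :=
    fun v => ((d : ℝ) / (2 * δ)) • ((L (x + δ • v) - L (x - δ • v)) • v) with hFδ
  have hbound : ∀ v : EuclideanSpace ℝ (Fin d), ‖v‖ = 1 →
      ‖Fδ v - Gv v‖ ≤ (d : ℝ) * ε' := by
    intro v hv
    have hmem : ∀ t : ℝ, |t| ≤ δ → x + t • v ∈ Metric.closedBall x δ := by
      intro t ht
      rw [Metric.mem_closedBall, dist_eq_norm]
      simp only [add_sub_cancel_left]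
      rw [norm_smul, hv, mul_one]
      exact ht
    have ha : x - δ • v ∈ Metric.closedBall x δ := by
      have := hmem (-δ) (by rw [abs_neg, abs_of_pos hδ0])
      simpa [neg_smul, sub_eq_add_neg] using this
    have hb : x + δ • v ∈ Metric.closedBall x δ := hmem δ (by rw [abs_of_pos hδ0])
    have hmvt := Convex.norm_image_sub_le_of_norm_fderiv_le'
      (f := L) (φ := φ) (C := ε') (s := Metric.closedBall x δ)
      (fun y _ => hLdiff y)
      (fun y hy => by
        apply le_of_lt
        rw [← dist_eq_norm]
        apply hrb
        rw [Metric.mem_closedBall] at hy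
        exact lt_of_le_of_lt hy hδr')
      (convex_closedBall x δ) ha hb
    have hba : (x + δ • v) - (x - δ • v) = (2 * δ) • v := by
      rw [two_mul, add_smul]
      abel
    rw [hba] at hmvt
    have hφba : φ ((2 * δ) • v) = (2 * δ) * φ v := by
      simp
    rw [hφba, norm_smul (2 * δ) v] at hmvt
    rw [hv, mul_one] at hmvt
    have h2δ : (0:ℝ) < 2 * δ := by linarith
    have h2δ' : ‖(2 * δ : ℝ)‖ = 2 * δ := abs_of_pos h2δ
    rw [h2δ'] at hmvt
    -- now hmvt : |L b - L a - 2δ φ v| ≤ ε' * (2δ)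
    have hrw : Fδ v - Gv v
        = (((d : ℝ) / (2 * δ)) * (L (x + δ • v) - L (x - δ • v)) - (d : ℝ) * φ v) • v := by
      simp only [hFδ, hGv, smul_smul, hginner v, sub_smul, smul_sub, mul_sub]
    rw [hrw, norm_smul, hv, mul_one]
    have hkey : ((d : ℝ) / (2 * δ)) * (L (x + δ • v) - L (x - δ • v)) - (d : ℝ) * φ v
        = ((d : ℝ) / (2 * δ)) * ((L (x + δ • v) - L (x - δ • v)) - (2 * δ) * φ v) := by
      field_simp
    rw [hkey, norm_mul]
    have hpos : ‖(d : ℝ) / (2 * δ)‖ = (d : ℝ) / (2 * δ) := by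
      rw [Real.norm_eq_abs, abs_of_nonneg (by positivity)]
    rw [hpos]
    calc ((d : ℝ) / (2 * δ)) * ‖L (x + δ • v) - L (x - δ • v) - 2 * δ * φ v‖
        ≤ ((d : ℝ) / (2 * δ)) * (ε' * (2 * δ)) := by
          apply mul_le_mul_of_nonneg_left _ (by positivity)
          exact hmvt
      _ = (d : ℝ) * ε' := by field_simp
  -- integrability of the difference
  have hcontF : Continuous Fδ := by
    rw [hFδ]
    fun_prop
  have hdiffint : Integrable (fun v => Fδ v - Gv v) σ := by
    apply integrable_sphere_bound σ hσ_sphere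
      (hcontF.sub ((continuous_const.mul (continuous_const.inner (𝕜 := ℝ) continuous_id)).smul
        continuous_id)) ((d : ℝ) * ε')
    exact hbound
  have hFint : Integrable Fδ σ :=
    (hdiffint.add hGvint).congr (Filter.Eventually.of_forall fun v => by simp)
  rw [dist_eq_norm]
  have hsplit : (∫ v, Fδ v ∂σ) - G = ∫ v, (Fδ v - Gv v) ∂σ := by
    rw [integral_sub hFint hGvint, hGvi]
  calc ‖(∫ v, Fδ v ∂σ) - G‖ = ‖∫ v, (Fδ v - Gv v) ∂σ‖ := by rw [hsplit]
    _ ≤ ∫ _, (d : ℝ) * ε' ∂σ := by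
        apply norm_integral_le_of_norm_le (integrable_const _)
        filter_upwards [hσ_sphere] with v hv
        exact hbound v hv
    _ = (d : ℝ) * ε' := by simp
    _ < ε := hdε
end

section
/- Let n ≥ 1, let K ⊆ ℝ^n be a compact set, let p : ℝ^n → ℝ be a continuous nonnegative density on K (∫_K p(x) dx = 1), and let f* : ℝ^n → ℝ be bounded on K and continuous at every point of K except on a set of Lebesgue measure zero. Then for every ε > 0 there exists n_ε ∈ ℕ such that for every integer n' ≥ n_ε there exist weights a_1, …, a_{n'} ∈ ℝ^n and scalars b_1, …, b_{n'}, c_0, c_1, …, c_{n'} ∈ ℝ such that the one-hidden-layer ReLU network f(x) = c_0 + Σ_{i=1}^{n'} c_i · ReLU(⟨a_i, x⟩ + b_i) satisfies ∫_K (f*(x) − f(x))² · p(x) dx < ε. In particular, a ReLU neural network with sufficiently many neurons can approximate the almost-everywhere-continuous target mapping arbitrarily well in expected squared error (Theorem 2). -/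
open MeasureTheory
open Finset
open scoped ENNReal

section UniversalApproximationAux


lemma pl_key (s node : ℕ → ℝ) (Δ : ℝ) (hΔ : Δ ≠ 0)
    (hnode : ∀ j, node (j+1) - node j = Δ)
    (φ0 : ℕ → ℝ) (hs : ∀ j, s j = (φ0 (j+1) - φ0 j) / Δ)
    (d : ℕ → ℝ) (hd0 : d 0 = s 0) (hdS : ∀ j, d (j+1) = s (j+1) - s j)
    (u : ℝ) :
    ∀ j, ∑ i ∈ range (j+1), d i * (u - node i)
      = s j * (u - node j) + (φ0 j - φ0 0) := by
  intro j; induction j with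
  | zero => simp [hd0]
  | succ j ih =>
    rw [Finset.sum_range_succ, ih, hdS]
    have h2 : s j * Δ = φ0 (j+1) - φ0 j := by rw [hs]; field_simp
    linear_combination h2 + s j * (hnode j)

lemma pl_approx (φ : ℝ → ℝ) (hφ : Continuous φ) (R δ : ℝ) (hR : 0 < R) (hδ : 0 < δ) :
    ∃ (m : ℕ) (t d : Fin m → ℝ) (e₀ : ℝ),
      ∀ u ∈ Set.Icc (-R) R, |φ u - (e₀ + ∑ i, d i * max (u - t i) 0)| ≤ δ := by
  obtain ⟨η, hη, hmod⟩ := Metric.uniformContinuousOn_iff.mp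
    ((isCompact_Icc (a := -R) (b := R)).uniformContinuousOn_of_continuous hφ.continuousOn)
    (δ/2) (by linarith)
  set N : ℕ := ⌈2*R/η⌉₊ + 1 with hNdef
  have hN1 : 1 ≤ N := Nat.le_add_left 1 _
  have hNpos : (0:ℝ) < N := by positivity
  have hRη : 2*R/η < N := (Nat.le_ceil _).trans_lt (by exact_mod_cast Nat.lt_succ_self _)
  set Δ : ℝ := 2*R/N with hΔdef
  have hΔpos : 0 < Δ := by positivity
  have hΔη : Δ < η := by
    rw [hΔdef, div_lt_iff₀ hNpos]
    have h1 : (2*R/η) * η = 2*R := by field_simp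
    nlinarith [mul_lt_mul_of_pos_right hRη hη]
  set node : ℕ → ℝ := fun j => -R + j * Δ with hnodedef
  have hnode : ∀ j, node (j+1) - node j = Δ := by
    intro j; simp only [hnodedef]; push_cast; ring
  have hnodeN : node N = R := by
    simp only [hnodedef, hΔdef]; field_simp; ring
  have hnodemono : ∀ {j k : ℕ}, j ≤ k → node j ≤ node k := by
    intro j k hjk
    simp only [hnodedef, add_le_add_iff_left]
    have : (j:ℝ) ≤ k := by exact_mod_cast hjk
    nlinarith
  have hnodeIcc : ∀ j : ℕ, j ≤ N → node j ∈ Set.Icc (-R) R := by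
    intro j hj
    constructor
    · have : 0 ≤ (j:ℝ) * Δ := by positivity
      simp only [hnodedef]; linarith
    · exact (hnodemono hj).trans hnodeN.le
  set s : ℕ → ℝ := fun j => (φ (node (j+1)) - φ (node j)) / Δ with hsdef
  set d : ℕ → ℝ := fun i => if i = 0 then s 0 else s i - s (i-1) with hddef
  have key := pl_key s node Δ hΔpos.ne' hnode (fun j => φ (node j))
    (fun j => rfl) d (by simp [hddef]) (fun j => by simp [hddef]) 
  -- existence of the bracketing index
  have hbracket : ∀ u ∈ Set.Icc (-R) R, ∃ j, j < N ∧ node j ≤ u ∧ u ≤ node (j+1) := by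
    intro u hu
    have hq0 : 0 ≤ (u + R)/Δ := by
      apply div_nonneg _ hΔpos.le; linarith [hu.1]
    by_cases h : ⌊(u + R)/Δ⌋₊ < N
    · refine ⟨⌊(u + R)/Δ⌋₊, h, ?_, ?_⟩
      · have h1 : (⌊(u + R)/Δ⌋₊ : ℝ) ≤ (u + R)/Δ := Nat.floor_le hq0
        simp only [hnodedef]
        nlinarith [(le_div_iff₀ hΔpos).mp h1]
      · have h2 : (u + R)/Δ < ⌊(u + R)/Δ⌋₊ + 1 := Nat.lt_floor_add_one _
        simp only [hnodedef]
        push_cast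
        nlinarith [(div_lt_iff₀ hΔpos).mp h2]
    · refine ⟨N - 1, Nat.sub_lt (by omega) one_pos, ?_, ?_⟩
      · have h3 : (N:ℝ) ≤ (u + R)/Δ := by
          push_neg at h
          exact_mod_cast Nat.le_floor_iff hq0 |>.mp h
        have h4 : (N:ℝ) * Δ ≤ u + R := (le_div_iff₀ hΔpos).mp h3
        have h5 : (N:ℝ) * Δ = 2*R := by rw [hΔdef]; field_simp
        have : u = R := le_antisymm hu.2 (by linarith)
        rw [this, ← hnodeN]
        exact hnodemono (Nat.sub_le N 1)
      · have hNe : N - 1 + 1 = N := by omega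
        rw [hNe, hnodeN]; exact hu.2
  refine ⟨N, (fun i => node i), (fun i => d i), φ (-R), ?_⟩
  intro u hu
  obtain ⟨j, hjN, hj1, hj2⟩ := hbracket u hu
  have hsum1 : ∑ i : Fin N, d i * max (u - node i) 0
      = ∑ i ∈ range N, d i * max (u - node i) 0 :=
    Fin.sum_univ_eq_sum_range (fun i => d i * max (u - node i) 0) N
  have hsum2 : ∑ i ∈ range N, d i * max (u - node i) 0
      = ∑ i ∈ range (j+1), d i * max (u - node i) 0 := by
    refine (Finset.sum_subset (Finset.range_subset_range.2 (by omega)) ?_).symm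
    intro i hi1 hi2
    simp only [Finset.mem_range] at hi1 hi2
    have : u ≤ node i := hj2.trans (hnodemono (by omega))
    rw [max_eq_right (by linarith), mul_zero]
  have hsum3 : ∑ i ∈ range (j+1), d i * max (u - node i) 0
      = ∑ i ∈ range (j+1), d i * (u - node i) := by
    refine Finset.sum_congr rfl ?_
    intro i hi
    simp only [Finset.mem_range] at hi
    have : node i ≤ u := (hnodemono (by omega : i ≤ j)).trans hj1
    rw [max_eq_left (by linarith)]
  have hnode0 : node 0 = -R := by simp [hnodedef]
  have hnet : φ (-R) + ∑ i : Fin N, d i * max (u - node i) 0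
      = φ (node j) + s j * (u - node j) := by
    rw [hsum1, hsum2, hsum3, key u j]
    simp only [hnode0]
    ring
  rw [hnet]
  have hjIcc := hnodeIcc j (by omega)
  have hj1Icc := hnodeIcc (j+1) (by omega)
  have hΔj : node (j+1) = node j + Δ := by have := hnode j; linarith
  have hud : |u - node j| ≤ Δ := by
    rw [abs_of_nonneg (by linarith)]
    rw [hΔj] at hj2; linarith
  have e1 : |φ u - φ (node j)| < δ/2 := by
    have := hmod u hu (node j) hjIcc (by rw [Real.dist_eq]; exact hud.trans_lt hΔη)
    rwa [Real.dist_eq] at this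
  have e2 : |φ (node (j+1)) - φ (node j)| < δ/2 := by
    have := hmod (node (j+1)) hj1Icc (node j) hjIcc
      (by rw [Real.dist_eq, hnode j, abs_of_pos hΔpos]; exact hΔη)
    rwa [Real.dist_eq] at this
  have habs : |s j| * Δ = |φ (node (j+1)) - φ (node j)| := by
    rw [hsdef]
    simp only
    rw [abs_div, abs_of_pos hΔpos]
    field_simp
  have e3 : |s j * (u - node j)| ≤ |φ (node (j+1)) - φ (node j)| := by
    rw [abs_mul, ← habs]
    exact mul_le_mul_of_nonneg_left hud (abs_nonneg _)
  have hkey : φ u - (φ (node j) + s j * (u - node j))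
      = (φ u - φ (node j)) - s j * (u - node j) := by ring
  rw [hkey]
  calc |(φ u - φ (node j)) - s j * (u - node j)|
      ≤ |φ u - φ (node j)| + |s j * (u - node j)| := abs_sub _ _
    _ ≤ δ := by linarith


def IsNet {n : ℕ} (f : EuclideanSpace ℝ (Fin n) → ℝ) : Prop :=
  ∃ (m : ℕ) (a : Fin m → EuclideanSpace ℝ (Fin n)) (b c : Fin m → ℝ) (c₀ : ℝ),
    f = fun x => c₀ + ∑ i, c i * max ((inner ℝ (a i) x : ℝ) + b i) 0

lemma IsNet.const {n : ℕ} (r : ℝ) : IsNet (n := n) (fun _ => r) := by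
  refine ⟨0, ![], ![], ![], r, ?_⟩
  funext x; simp

lemma IsNet.add {n : ℕ} {f g : EuclideanSpace ℝ (Fin n) → ℝ} (hf : IsNet f) (hg : IsNet g) :
    IsNet (fun x => f x + g x) := by
  obtain ⟨m, a, b, c, c₀, rfl⟩ := hf
  obtain ⟨m', a', b', c', c₀', rfl⟩ := hg
  refine ⟨m + m', Fin.append a a', Fin.append b b', Fin.append c c', c₀ + c₀', ?_⟩
  funext x
  simp only [Fin.sum_univ_add, Fin.append_left, Fin.append_right]
  ring

lemma IsNet.smul {n : ℕ} {f : EuclideanSpace ℝ (Fin n) → ℝ} (r : ℝ) (hf : IsNet f) :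
    IsNet (fun x => r * f x) := by
  obtain ⟨m, a, b, c, c₀, rfl⟩ := hf
  refine ⟨m, a, b, fun i => r * c i, r * c₀, ?_⟩
  funext x
  simp only [Finset.mul_sum, mul_add]
  ring_nf

lemma approx_ridge {n : ℕ} {K : Set (EuclideanSpace ℝ (Fin n))} (hK : IsCompact K)
    (a : EuclideanSpace ℝ (Fin n)) (φ : ℝ → ℝ) (hφ : Continuous φ) (δ : ℝ) (hδ : 0 < δ) :
    ∃ f, IsNet f ∧ ∀ x ∈ K, |φ ((inner ℝ a x : ℝ)) - f x| ≤ δ := by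
  obtain ⟨R1, hR1⟩ := hK.isBounded.exists_norm_le
  set R : ℝ := ‖a‖ * max R1 0 + 1 with hRdef
  have hRpos : 0 < R := by positivity
  have hmem : ∀ x ∈ K, (inner ℝ a x : ℝ) ∈ Set.Icc (-R) R := by
    intro x hx
    have h1 : |(inner ℝ a x : ℝ)| ≤ ‖a‖ * ‖x‖ := abs_real_inner_le_norm a x
    have h2 : ‖x‖ ≤ max R1 0 := (hR1 x hx).trans (le_max_left _ _)
    have h3 : ‖a‖ * ‖x‖ ≤ ‖a‖ * max R1 0 := by
      exact mul_le_mul_of_nonneg_left h2 (norm_nonneg a)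
    have h4 : |(inner ℝ a x : ℝ)| ≤ R := by
      have h5 : ‖a‖ * ‖x‖ ≤ R := by rw [hRdef]; linarith
      linarith [h1]
    exact Set.mem_Icc.mpr (abs_le.mp h4)
  obtain ⟨m, t, d, e₀, hpl⟩ := pl_approx φ hφ R δ hRpos hδ
  refine ⟨fun x => e₀ + ∑ i, d i * max ((inner ℝ ((fun _ => a) i) x : ℝ) + (fun i => - t i) i) 0,
    ⟨m, fun _ => a, fun i => - t i, d, e₀, rfl⟩, ?_⟩
  intro x hx
  have := hpl (inner ℝ a x : ℝ) (hmem x hx)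
  simpa [sub_eq_add_neg] using this

noncomputable def cosRidge {n : ℕ} (K : Set (EuclideanSpace ℝ (Fin n))) (a : EuclideanSpace ℝ (Fin n))
    (b : ℝ) : C(K, ℝ) :=
  ⟨fun x => Real.cos ((inner ℝ a (x : EuclideanSpace ℝ (Fin n)) : ℝ) + b),
   Real.continuous_cos.comp ((continuous_const.inner continuous_subtype_val).add continuous_const)⟩

lemma cosRidge_apply {n : ℕ} (K : Set (EuclideanSpace ℝ (Fin n))) (a : EuclideanSpace ℝ (Fin n))
    (b : ℝ) (x : K) :
    cosRidge K a b x = Real.cos ((inner ℝ a (x : EuclideanSpace ℝ (Fin n)) : ℝ) + b) := rfl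

lemma uniform_net_approx {n : ℕ} {K : Set (EuclideanSpace ℝ (Fin n))} (hK : IsCompact K)
    (g : EuclideanSpace ℝ (Fin n) → ℝ) (hg : Continuous g) (δ : ℝ) (hδ : 0 < δ) :
    ∃ f, IsNet f ∧ ∀ x ∈ K, |g x - f x| ≤ δ := by
  haveI : CompactSpace K := isCompact_iff_compactSpace.mp hK
  -- the set of cosine-ridge functions on K
  set T : Set C(K, ℝ) := {q | ∃ (a : EuclideanSpace ℝ (Fin n)) (b : ℝ),
      q = cosRidge K a b} with hTdef
  have hone : (1 : C(K, ℝ)) ∈ Submodule.span ℝ T := by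
    apply Submodule.subset_span
    refine ⟨0, 0, ?_⟩
    ext x
    simp [cosRidge_apply]
  have hmulT : ∀ q1 ∈ T, ∀ q2 ∈ T, q1 * q2 ∈ Submodule.span ℝ T := by
    rintro q1 ⟨a, b, rfl⟩ q2 ⟨a', b', rfl⟩
    have hid : cosRidge K a b * cosRidge K a' b'
        = (1/2 : ℝ) • cosRidge K (a + a') (b + b') + (1/2 : ℝ) • cosRidge K (a - a') (b - b') := by
      ext x
      have key : ∀ U V : ℝ, Real.cos U * Real.cos V
          = 1/2 * Real.cos (U + V) + 1/2 * Real.cos (U - V) := by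
        intro U V
        rw [Real.cos_add, Real.cos_sub]
        ring
      simp only [ContinuousMap.mul_apply, ContinuousMap.add_apply, ContinuousMap.smul_apply,
        cosRidge_apply, smul_eq_mul, inner_add_left, inner_sub_left]
      set p : ℝ := (inner ℝ a (x : EuclideanSpace ℝ (Fin n)) : ℝ) with hp
      set p' : ℝ := (inner ℝ a' (x : EuclideanSpace ℝ (Fin n)) : ℝ) with hp'
      have e1 : p + p' + (b + b') = (p + b) + (p' + b') := by ring
      have e2 : p - p' + (b - b') = (p + b) - (p' + b') := by ring
      rw [e1, e2, key]
    rw [hid]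
    exact Submodule.add_mem _
      (Submodule.smul_mem _ _ (Submodule.subset_span ⟨a + a', b + b', rfl⟩))
      (Submodule.smul_mem _ _ (Submodule.subset_span ⟨a - a', b - b', rfl⟩))
  have hmul : ∀ q1 q2 : C(K, ℝ), q1 ∈ Submodule.span ℝ T → q2 ∈ Submodule.span ℝ T →
      q1 * q2 ∈ Submodule.span ℝ T := by
    intro q1 q2 h1 h2
    have := Submodule.mul_mem_mul h1 h2
    rw [Submodule.span_mul_span] at this
    refine Submodule.span_le.mpr ?_ this
    rintro q ⟨q1, hq1, q2, hq2, rfl⟩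
    exact hmulT q1 hq1 q2 hq2
  set A : Subalgebra ℝ C(K, ℝ) := (Submodule.span ℝ T).toSubalgebra hone hmul with hAdef
  have hsep : A.SeparatesPoints := by
    intro x y hxy
    set v : EuclideanSpace ℝ (Fin n) := (x : EuclideanSpace ℝ (Fin n)) - y with hvdef
    have hv : v ≠ 0 := sub_ne_zero.mpr (fun h => hxy (Subtype.ext h))
    have hv0 : (0:ℝ) < ‖v‖ := norm_pos_iff.mpr hv
    have hnv : (0:ℝ) < ‖v‖^2 := by positivity
    set r : ℝ := Real.pi / (‖v‖^2 + Real.pi) with hrdef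
    have hπ := Real.pi_pos
    have hr : 0 < r := by positivity
    set a : EuclideanSpace ℝ (Fin n) := r • v with hadef
    set u : ℝ := (inner ℝ a (x : EuclideanSpace ℝ (Fin n)) : ℝ) with hudef
    set w : ℝ := (inner ℝ a (y : EuclideanSpace ℝ (Fin n)) : ℝ) with hwdef
    have huw : u - w = r * ‖v‖^2 := by
      rw [hudef, hwdef, hadef]
      rw [real_inner_smul_left, real_inner_smul_left, ← mul_sub, ← inner_sub_right]
      have : (x : EuclideanSpace ℝ (Fin n)) - y = v := rfl
      rw [this, real_inner_self_eq_norm_sq]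
    have hθpos : 0 < r * ‖v‖^2 := by positivity
    have hθlt : r * ‖v‖^2 < Real.pi := by
      rw [hrdef, div_mul_eq_mul_div, div_lt_iff₀ (by positivity)]
      nlinarith
    set b : ℝ := Real.pi/2 - (u + w)/2 with hbdef
    refine ⟨_, ⟨cosRidge K a b, Submodule.subset_span ⟨a, b, rfl⟩, rfl⟩, ?_⟩
    simp only [cosRidge_apply, ← hudef, ← hwdef]
    intro heq
    have hdiff : Real.cos (u + b) - Real.cos (w + b) = 0 := by rw [heq]; ring
    rw [Real.cos_sub_cos] at hdiff
    have e1 : (u + b + (w + b))/2 = Real.pi/2 := by rw [hbdef]; ring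
    have e2 : (u + b - (w + b))/2 = (u - w)/2 := by ring
    rw [e1, e2, Real.sin_pi_div_two, huw] at hdiff
    have hsin : 0 < Real.sin (r * ‖v‖^2 / 2) :=
      Real.sin_pos_of_pos_of_lt_pi (by positivity) (by linarith)
    nlinarith
  -- Stone–Weierstrass
  obtain ⟨⟨q, hqA⟩, hq⟩ := ContinuousMap.exists_mem_subalgebra_near_continuous_of_separatesPoints
    A hsep (fun x : K => g x) (hg.comp continuous_subtype_val) (δ/2) (by linarith)
  -- every element of the span is approximable by networks on K
  have happrox : ∀ q : C(K, ℝ), q ∈ Submodule.span ℝ T →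
      ∀ ρ : ℝ, 0 < ρ →
        ∃ f : EuclideanSpace ℝ (Fin n) → ℝ, IsNet f ∧
          ∀ x : K, |q x - f (x : EuclideanSpace ℝ (Fin n))| ≤ ρ := by
    intro q hq
    induction hq using Submodule.span_induction with
    | mem q hqT =>
      obtain ⟨a, b, rfl⟩ := hqT
      intro ρ hρ
      obtain ⟨f, hfnet, hf⟩ := approx_ridge hK a (fun u => Real.cos (u + b))
        (Real.continuous_cos.comp (continuous_id.add continuous_const)) ρ hρ
      exact ⟨f, hfnet, fun x => hf (x : EuclideanSpace ℝ (Fin n)) x.2⟩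
    | zero =>
      intro ρ hρ
      exact ⟨fun _ => 0, IsNet.const 0, fun x => by simp [hρ.le]⟩
    | add q1 q2 h1 h2 ih1 ih2 =>
      intro ρ hρ
      obtain ⟨f1, hn1, hf1⟩ := ih1 (ρ/2) (by linarith)
      obtain ⟨f2, hn2, hf2⟩ := ih2 (ρ/2) (by linarith)
      refine ⟨fun x => f1 x + f2 x, hn1.add hn2, fun x => ?_⟩
      have := abs_add_le (q1 x - f1 x) (q2 x - f2 x)
      simp only [ContinuousMap.add_apply]
      calc |q1 x + q2 x - (f1 x + f2 x)| = |(q1 x - f1 x) + (q2 x - f2 x)| := by ring_nf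
        _ ≤ |q1 x - f1 x| + |q2 x - f2 x| := abs_add_le _ _
        _ ≤ ρ := by linarith [hf1 x, hf2 x]
    | smul r q hmem ih =>
      intro ρ hρ
      obtain ⟨f, hn, hf⟩ := ih (ρ/(|r|+1)) (by positivity)
      refine ⟨fun x => r * f x, IsNet.smul r hn, fun x => ?_⟩
      simp only [ContinuousMap.smul_apply, smul_eq_mul]
      rw [← mul_sub, abs_mul]
      have h1 : |r| * |q x - f x| ≤ |r| * (ρ/(|r|+1)) :=
        mul_le_mul_of_nonneg_left (hf x) (abs_nonneg r)
      have h2 : |r| * (ρ/(|r|+1)) ≤ ρ := by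
        rw [mul_div_assoc']  -- |r| * ρ / (|r|+1) ≤ ρ
        rw [div_le_iff₀ (by positivity)]
        nlinarith [abs_nonneg r]
      linarith
  obtain ⟨f, hfnet, hf⟩ := happrox q hqA (δ/2) (by linarith)
  refine ⟨f, hfnet, fun x hx => ?_⟩
  have h1 := hq ⟨x, hx⟩
  have h2 := hf ⟨x, hx⟩
  rw [Real.norm_eq_abs] at h1
  calc |g x - f x| = |(g x - q ⟨x, hx⟩) + (q ⟨x, hx⟩ - f x)| := by ring_nf
    _ ≤ |g x - q ⟨x, hx⟩| + |q ⟨x, hx⟩ - f x| := abs_add_le _ _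
    _ ≤ δ := by rw [abs_sub_comm] at h1; linarith


end UniversalApproximationAux

lemma IsNet.continuous {n : ℕ} {f : EuclideanSpace ℝ (Fin n) → ℝ} (hf : IsNet f) :
    Continuous f := by
  obtain ⟨m, a, b, c, c₀, rfl⟩ := hf
  refine continuous_const.add (continuous_finset_sum _ fun i _ => continuous_const.mul ?_)
  exact ((continuous_const.inner continuous_id).add continuous_const).max continuous_const


/-- padding: a net with `m` neurons can be written with any `n' ≥ m` neurons -/
lemma net_pad {n : ℕ} {f : EuclideanSpace ℝ (Fin n) → ℝ} (hf : IsNet f) :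
    ∃ m : ℕ, ∀ n' : ℕ, m ≤ n' →
      ∃ (a : Fin n' → EuclideanSpace ℝ (Fin n)) (b c : Fin n' → ℝ) (c₀ : ℝ),
        ∀ x, f x = c₀ + ∑ i, c i * max ((inner ℝ (a i) x : ℝ) + b i) 0 := by
  obtain ⟨m, a, b, c, c₀, rfl⟩ := hf
  refine ⟨m, fun n' hm => ?_⟩
  set A : ℕ → EuclideanSpace ℝ (Fin n) := fun i => if h : i < m then a ⟨i, h⟩ else 0 with hA
  set B : ℕ → ℝ := fun i => if h : i < m then b ⟨i, h⟩ else 0 with hB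
  set C : ℕ → ℝ := fun i => if h : i < m then c ⟨i, h⟩ else 0 with hC
  refine ⟨fun i => A i, fun i => B i, fun i => C i, c₀, fun x => ?_⟩
  have h1 : ∑ i : Fin n', C i * max ((inner ℝ (A i) x : ℝ) + B i) 0
      = ∑ i ∈ range n', C i * max ((inner ℝ (A i) x : ℝ) + B i) 0 :=
    Fin.sum_univ_eq_sum_range (fun i => C i * max ((inner ℝ (A i) x : ℝ) + B i) 0) n'
  have h2 : ∑ i ∈ range n', C i * max ((inner ℝ (A i) x : ℝ) + B i) 0
      = ∑ i ∈ range m, C i * max ((inner ℝ (A i) x : ℝ) + B i) 0 := by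
    refine (Finset.sum_subset (Finset.range_subset_range.2 hm) ?_).symm
    intro i _ hi2
    simp only [Finset.mem_range, not_lt] at hi2
    have : C i = 0 := by simp [hC, Nat.not_lt.mpr hi2]
    rw [this, zero_mul]
  have h3 : ∑ i ∈ range m, C i * max ((inner ℝ (A i) x : ℝ) + B i) 0
      = ∑ i : Fin m, c i * max ((inner ℝ (a i) x : ℝ) + b i) 0 := by
    rw [← Fin.sum_univ_eq_sum_range (fun i => C i * max ((inner ℝ (A i) x : ℝ) + B i) 0) m]
    refine Finset.sum_congr rfl fun i _ => ?_
    simp [hA, hB, hC, i.isLt]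
  simp only [h1, h2, h3]

set_option maxHeartbeats 1000000 in
/-- **Theorem 2 (universal approximation of the a.e.-continuous load–solution mapping).**
Let `K ⊆ ℝ^n` be compact, `p` a continuous nonnegative density on `K`, and `f*` bounded
on `K` and continuous at every point of `K` except on a set of Lebesgue measure zero.
Then for every `ε > 0` there is an `n_ε` such that for every `n' ≥ n_ε` some
one-hidden-layer ReLU network `f(x) = c₀ + ∑ i, cᵢ · ReLU(⟨aᵢ, x⟩ + bᵢ)` with `n'`
neurons satisfies `∫_K (f*(x) - f(x))² p(x) dx < ε`. -/
theorem relu_network_universal_approximation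
    (n : ℕ) (hn : 1 ≤ n)
    (K : Set (EuclideanSpace ℝ (Fin n))) (hK : IsCompact K)
    (p : EuclideanSpace ℝ (Fin n) → ℝ) (hp : Continuous p) (hp0 : ∀ x, 0 ≤ p x)
    (hp1 : ∫ x in K, p x ∂volume = 1)
    (fstar : EuclideanSpace ℝ (Fin n) → ℝ)
    (hfb : ∃ M > (0 : ℝ), ∀ x ∈ K, |fstar x| ≤ M)
    (S : Set (EuclideanSpace ℝ (Fin n))) (hS : volume S = 0)
    (hfc : ∀ x ∈ K, x ∉ S → ContinuousAt fstar x)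
    (ε : ℝ) (hε : 0 < ε) :
    ∃ nε : ℕ, ∀ n' : ℕ, nε ≤ n' →
      ∃ (a : Fin n' → EuclideanSpace ℝ (Fin n)) (b c : Fin n' → ℝ) (c₀ : ℝ),
        ∫ x in K,
            (fstar x - (c₀ + ∑ i, c i * max ((inner ℝ (a i) x : ℝ) + b i) 0)) ^ 2 * p x
          ∂volume < ε := by
  obtain ⟨M, hM0, hM⟩ := hfb
  set ν : Measure (EuclideanSpace ℝ (Fin n)) := volume.restrict K with hν
  haveI : IsFiniteMeasure ν := by
    constructor
    rw [hν, Measure.restrict_apply_univ]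
    exact hK.measure_lt_top
  haveI hreg : ν.Regular := Measure.Regular.restrict_of_measure_ne_top hK.measure_lt_top.ne
  -- measurability of fstar on K
  set S' : Set (EuclideanSpace ℝ (Fin n)) := toMeasurable volume S with hS'
  have hS'0 : volume S' = 0 := by rw [hS', measure_toMeasurable]; exact hS
  have hS'm : MeasurableSet S' := measurableSet_toMeasurable _ _
  have hKm : MeasurableSet K := hK.isClosed.measurableSet
  have hKS : K =ᵐ[volume] (K \ S' : Set _) := by
    refine (MeasureTheory.ae_eq_set.mpr ⟨?_, ?_⟩)
    · refine measure_mono_null ?_ hS'0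
      intro x hx
      rcases hx with ⟨hxK, hx2⟩
      by_contra hxS'
      exact hx2 ⟨hxK, hxS'⟩
    · refine measure_mono_null ?_ (measure_empty (μ := volume))
      intro x hx
      exact absurd hx.1.1 hx.2
  have hcont : ContinuousOn fstar (K \ S') := fun x hx =>
    (hfc x hx.1 (fun h => hx.2 (subset_toMeasurable _ _ h))).continuousWithinAt
  have hmeas : AEStronglyMeasurable fstar ν := by
    rw [hν, Measure.restrict_congr_set hKS]
    exact hcont.aestronglyMeasurable (hKm.diff hS'm)
  have hMae : ∀ᵐ x ∂ν, ‖fstar x‖ ≤ M := by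
    rw [hν]
    refine (ae_restrict_iff' hKm).mpr (Filter.Eventually.of_forall (fun x hx => ?_))
    rw [Real.norm_eq_abs]; exact hM x hx
  have hf2 : MemLp fstar 2 ν :=
    (memLp_top_of_bound hmeas M hMae).mono_exponent le_top
  -- bound on p
  obtain ⟨C0, hC0⟩ := (hK.image hp).bddAbove
  set C : ℝ := max C0 1 with hCdef
  have hC1 : (1:ℝ) ≤ C := le_max_right _ _
  have hC0' : (0:ℝ) < C := lt_of_lt_of_le one_pos hC1
  have hpC : ∀ x ∈ K, p x ≤ C := fun x hx =>
    le_trans (hC0 (Set.mem_image_of_mem p hx)) (le_max_left _ _)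
  set V : ℝ := (ν Set.univ).toReal with hV
  have hV0 : (0:ℝ) ≤ V := ENNReal.toReal_nonneg
  set δ₁ : ℝ := ε / (8*C) with hδ₁
  have hδ₁0 : 0 < δ₁ := by positivity
  set δ₂ : ℝ := min 1 (ε/(8*C*(V+1))) with hδ₂
  have hδ₂0 : 0 < δ₂ := lt_min one_pos (by positivity)
  have hδ₂1 : δ₂ ≤ 1 := min_le_left _ _
  -- L² approximation by a continuous function
  have h2eq : (2 : ℝ≥0∞) = ENNReal.ofReal (2:ℝ) := by norm_num
  replace hf2 : MemLp fstar (ENNReal.ofReal (2:ℝ)) ν := by rw [← h2eq]; exact hf2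
  obtain ⟨g, hgsupp, hgint, hgcont, hgmem⟩ :=
    hf2.exists_hasCompactSupport_integral_rpow_sub_le two_pos hδ₁0
  rw [← h2eq] at hf2 hgmem
  have hgint' : ∫ x, (fstar x - g x)^2 ∂ν ≤ δ₁ := by
    have hpt : ∀ x, ‖fstar x - g x‖ ^ (2:ℝ) = (fstar x - g x)^2 := fun x => by
      rw [show ((2:ℝ)) = ((2:ℕ):ℝ) by norm_num, Real.rpow_natCast, Real.norm_eq_abs, sq_abs]
    simpa only [hpt] using hgint
  -- uniform approximation of g by a network on K
  obtain ⟨f, hfnet, hffK⟩ := uniform_net_approx hK g hgcont δ₂ hδ₂0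
  obtain ⟨m, hpad⟩ := net_pad hfnet
  refine ⟨m, fun n' hm => ?_⟩
  obtain ⟨a, b, c, c₀, hrep⟩ := hpad n' hm
  refine ⟨a, b, c, c₀, ?_⟩
  simp only [← hrep]
  -- integrability
  obtain ⟨Mf, hMf⟩ := hK.exists_bound_of_continuousOn hfnet.continuous.continuousOn
  have hφsm : AEStronglyMeasurable (fun x => (fstar x - f x)^2 * p x) ν := by
    have : (fun x => (fstar x - f x)^2 * p x)
        = fun x => ((fstar x - f x) * (fstar x - f x)) * p x := by funext x; ring
    rw [this]
    exact (((hmeas.sub hfnet.continuous.aestronglyMeasurable).mul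
      (hmeas.sub hfnet.continuous.aestronglyMeasurable)).mul hp.aestronglyMeasurable)
  have hφbd : ∀ᵐ x ∂ν, ‖(fstar x - f x)^2 * p x‖ ≤ (M + Mf)^2 * C := by
    rw [hν]
    refine (ae_restrict_iff' hKm).mpr (Filter.Eventually.of_forall (fun x hx => ?_))
    have h1 := hM x hx
    have h2 := hMf x hx
    rw [Real.norm_eq_abs] at h2 ⊢
    have h3 : |fstar x - f x| ≤ M + Mf := (abs_sub _ _).trans (by linarith)
    have h4 : (fstar x - f x)^2 ≤ (M + Mf)^2 := by nlinarith [abs_nonneg (fstar x - f x), sq_abs (fstar x - f x)]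
    have h5 := hp0 x
    have h6 := hpC x hx
    rw [abs_of_nonneg (by positivity)]
    nlinarith [sq_nonneg (fstar x - f x)]
  have hφint : Integrable (fun x => (fstar x - f x)^2 * p x) ν :=
    Integrable.mono' (integrable_const _) hφsm hφbd
  have hsub2 : MemLp (fstar - g) 2 ν := hf2.sub hgmem
  have hqint : Integrable (fun x => (fstar x - g x)^2) ν := by
    have := hsub2.integrable_sq
    simpa [Pi.sub_apply] using this
  have hDint : Integrable (fun x => 2*C*(fstar x - g x)^2 + 2*C*δ₂^2) ν :=
    (hqint.const_mul _).add (integrable_const _)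
  have hmono : ∫ x, (fstar x - f x)^2 * p x ∂ν
      ≤ ∫ x, (2*C*(fstar x - g x)^2 + 2*C*δ₂^2) ∂ν := by
    refine integral_mono_ae hφint hDint ?_
    rw [hν]
    refine (ae_restrict_iff' hKm).mpr (Filter.Eventually.of_forall (fun x hx => ?_))
    have h1 := hffK x hx
    have h5 : (g x - f x)^2 ≤ δ₂^2 := by
      nlinarith [abs_nonneg (g x - f x), sq_abs (g x - f x)]
    have h6 : (fstar x - f x)^2 ≤ 2*(fstar x - g x)^2 + 2*δ₂^2 := by
      nlinarith [sq_nonneg ((fstar x - g x) - (g x - f x))]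
    have h7 := hp0 x
    have h8 := hpC x hx
    have h9 : (0:ℝ) ≤ 2*(fstar x - g x)^2 + 2*δ₂^2 := by positivity
    calc (fstar x - f x)^2 * p x
        ≤ (2*(fstar x - g x)^2 + 2*δ₂^2) * p x := mul_le_mul_of_nonneg_right h6 h7
      _ ≤ (2*(fstar x - g x)^2 + 2*δ₂^2) * C := mul_le_mul_of_nonneg_left h8 h9
      _ = 2*C*(fstar x - g x)^2 + 2*C*δ₂^2 := by ring
  have hDval : ∫ x, (2*C*(fstar x - g x)^2 + 2*C*δ₂^2) ∂ν
      = 2*C*(∫ x, (fstar x - g x)^2 ∂ν) + 2*C*δ₂^2*V := by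
    rw [integral_add (hqint.const_mul _) (integrable_const _), MeasureTheory.integral_const_mul,
      integral_const, smul_eq_mul, measureReal_def, hV]
    ring
  have k1 : 2*C*δ₁ = ε/4 := by rw [hδ₁]; field_simp; ring
  have k2 : δ₂ ≤ ε/(8*C*(V+1)) := min_le_right _ _
  have k3 : 2*C*δ₂^2*V ≤ ε/4 := by
    have h1 : δ₂^2 ≤ δ₂ := by nlinarith
    have h2 : δ₂ * (8*C*(V+1)) ≤ ε := by
      calc δ₂ * (8*C*(V+1)) ≤ (ε/(8*C*(V+1))) * (8*C*(V+1)) :=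
            mul_le_mul_of_nonneg_right k2 (by positivity)
        _ = ε := by field_simp
    nlinarith [mul_le_mul_of_nonneg_left h1 (by positivity : (0:ℝ) ≤ 2*C*V),
      mul_nonneg (mul_nonneg (by norm_num : (0:ℝ) ≤ 2) hC0'.le) hδ₂0.le]
  have k4 : 2*C*(∫ x, (fstar x - g x)^2 ∂ν) ≤ 2*C*δ₁ :=
    mul_le_mul_of_nonneg_left hgint' (by positivity)
  calc ∫ x, (fstar x - f x)^2 * p x ∂ν
      ≤ ∫ x, (2*C*(fstar x - g x)^2 + 2*C*δ₂^2) ∂ν := hmono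
    _ = 2*C*(∫ x, (fstar x - g x)^2 ∂ν) + 2*C*δ₂^2*V := hDval
    _ ≤ ε/4 + ε/4 := by rw [← k1]; linarith
    _ < ε := by linarith
end
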